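/- If δ_0 > 0 and δ_{i+1} = δ_i/(1+δ_i)^2, then for all i ≥ 1 one has δ_i < 1/(2i), and there exists a constant c > 0 (one may take c = 2(1/δ_0 + δ_0 + 1)) such that δ_i > 1/(2i) − (c + log i)/(8 i²) for all i ≥ 1. -/

import Mathlib

theorem stmt4 (d : ℕ → ℝ) (h0 : 0 < d 0)
    (hrec : ∀ i, d (i+1) = d i / (1 + d i)^2) :
    (∀ i : ℕ, 1 ≤ i → d i < 1 / (2 * i)) ∧
    ∃ c : ℝ, 0 < c ∧ c = 2 * (1 / d 0 + d 0 + 1) ∧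
      ∀ i : ℕ, 1 ≤ i →
        1 / (2 * i) - (c + Real.log i) / (8 * (i : ℝ)^2) < d i := by
  have hpos : ∀ i, 0 < d i := by
    intro i; induction i with
    | zero => exact h0
    | succ n ih => rw [hrec]; positivity
  have hinv : ∀ i, 1 / d (i+1) = 1 / d i + 2 + d i := by
    intro i
    have h1 : d i ≠ 0 := (hpos i).ne'
    have h2 : (0:ℝ) < 1 + d i := by have := hpos i; linarith
    rw [hrec]; field_simp; ring
  have hsum : ∀ i, 1 / d i = 1 / d 0 + 2*(i:ℝ) + ∑ k ∈ Finset.range i, d k := by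
    intro i; induction i with
    | zero => simp
    | succ n ih => rw [hinv, ih, Finset.sum_range_succ]; push_cast; ring
  have hlow : ∀ i : ℕ, 2*(i:ℝ) + 1/d 0 ≤ 1/d i := by
    intro i; induction i with
    | zero => simp
    | succ n ih =>
      rw [hinv]; have := hpos n; push_cast; push_cast at ih; linarith
  have part1 : ∀ i : ℕ, 1 ≤ i → d i < 1 / (2*(i:ℝ)) := by
    intro i hi
    have hi' : (1:ℝ) ≤ i := by exact_mod_cast hi
    have h2i : (0:ℝ) < 2*i := by linarith
    have hd0 : 0 < 1/d 0 := by positivity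
    have h : 2*(i:ℝ) < 1/d i := by have := hlow i; linarith
    calc d i = 1/(1/d i) := (one_div_one_div _).symm
      _ < 1/(2*(i:ℝ)) := one_div_lt_one_div_of_lt h2i h
  have harm : ∀ n : ℕ, ∑ k ∈ Finset.range n, (1:ℝ)/(k+1) ≤ 1 + Real.log n := by
    intro n; induction n with
    | zero => simp
    | succ m ih =>
      rw [Finset.sum_range_succ]
      rcases Nat.eq_zero_or_pos m with hm | hm
      · subst hm; simp
      · have hm' : (0:ℝ) < m := by exact_mod_cast hm
        have hx : (0:ℝ) < (m:ℝ)/(m+1) := by positivity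
        have hls := Real.log_le_sub_one_of_pos hx
        rw [Real.log_div hm'.ne' (by positivity)] at hls
        have he : (m:ℝ)/((m:ℝ)+1) - 1 = -(1/((m:ℝ)+1)) := by field_simp; ring
        rw [he] at hls
        push_cast; push_cast at ih; linarith
  have hS : ∀ i : ℕ, 1 ≤ i →
      ∑ k ∈ Finset.range i, d k ≤ d 0 + (1 + Real.log i)/2 := by
    intro i hi
    obtain ⟨m, rfl⟩ : ∃ m, i = m + 1 := ⟨i - 1, (Nat.succ_pred_eq_of_pos hi).symm⟩
    rw [Finset.sum_range_succ']
    have hterm : ∀ k ∈ Finset.range m, d (k+1) ≤ (1/2)*(1/((k:ℝ)+1)) := by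
      intro k _
      have h1 := part1 (k+1) (Nat.le_add_left 1 k)
      have h2 : (((k+1 : ℕ)):ℝ) = (k:ℝ)+1 := by push_cast; ring
      rw [h2] at h1
      have hk : (0:ℝ) < (k:ℝ)+1 := by positivity
      have : 1/(2*((k:ℝ)+1)) = (1/2)*(1/((k:ℝ)+1)) := by field_simp
      linarith [this ▸ h1]
    have h1 : ∑ k ∈ Finset.range m, d (k+1)
        ≤ ∑ k ∈ Finset.range m, (1/2)*(1/((k:ℝ)+1)) := Finset.sum_le_sum hterm
    rw [← Finset.mul_sum] at h1
    have h2 := harm m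
    have hlog : Real.log m ≤ Real.log ((m:ℝ)+1) := by
      rcases Nat.eq_zero_or_pos m with hm | hm
      · subst hm; simp
      · have hm' : (0:ℝ) < m := by exact_mod_cast hm
        apply Real.log_le_log hm'; linarith
    push_cast; linarith
  refine ⟨part1, 2*(1/d 0 + d 0 + 1), by positivity, rfl, ?_⟩
  intro i hi
  have hi' : (1:ℝ) ≤ i := by exact_mod_cast hi
  have hiR : (0:ℝ) < i := by linarith
  set t : ℝ := 2*(1/d 0 + d 0 + 1) + Real.log i with ht_def
  have hlogn : 0 ≤ Real.log i := Real.log_nonneg hi'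
  have hd0 : 0 < 1/d 0 := by positivity
  have ht : 0 < t := by simp only [ht_def]; have := h0; nlinarith
  have hA : 1/d i < 2*(i:ℝ) + t/2 := by
    have h1 := hsum i
    have h2 := hS i hi
    simp only [ht_def]
    linarith
  have hB : (0:ℝ) < 2*(i:ℝ) + t/2 := by linarith
  have hApos : (0:ℝ) < 1/d i := by have := hpos i; positivity
  have heq : (1/(2*(i:ℝ)) - t/(8*(i:ℝ)^2)) * (2*(i:ℝ) + t/2) = 1 - t^2/(16*(i:ℝ)^2) := by
    field_simp; ring
  have hkey : 1/(2*(i:ℝ)) - t/(8*(i:ℝ)^2) < 1/(2*(i:ℝ) + t/2) := by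
    rw [lt_div_iff₀ hB, heq]
    have : 0 < t^2/(16*(i:ℝ)^2) := by positivity
    linarith
  have h2 : 1/(2*(i:ℝ) + t/2) < d i := by
    have h3 := one_div_lt_one_div_of_lt hApos hA
    rwa [one_div_one_div] at h3
  have : (2*(1/d 0 + d 0 + 1) + Real.log i) = t := ht_def.symm
  rw [show (8:ℝ)*(i:ℝ)^2 = 8*(i:ℝ)^2 from rfl]
  linarith [hkey, h2]
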